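/- arXiv:2601.04972 — 2 statements merged into one kernel-verified Lean document; each statement's English description precedes it below -/
import Mathlib

section
/- Let K be a non-archimedean GVF, i.e. a GVF whose height h satisfies the strong triangle inequality h(x+y) ≤ h(x,y). Define ĥ(x) := h(x,1) for x ∈ K× and set K_const := {x ∈ K | x = 0 or ĥ(x) = 0}. Then K_const is a subfield of K: it contains 0 and 1, and is closed under addition, negation, multiplication, and inversion of nonzero elements. -/
/-- A GVF height: a real-valued height on nonzero finite tuples over `K`
(indexed by arbitrary finite types), satisfying the GVF axioms. -/
structure GVFHeight (K : Type) [Field K] : Type 1 where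
  /-- the height of a (nonzero) finite tuple -/
  h : ∀ {ι : Type} [Fintype ι], (ι → K) → ℝ
  /-- invariance under permutations / reindexing -/
  reindex : ∀ {ι κ : Type} [Fintype ι] [Fintype κ] (e : ι ≃ κ) (x : κ → K),
    h (x ∘ e) = h x
  /-- height of one: h(1,1) = 0 -/
  h_one_one : h (fun _ : Fin 2 => (1 : K)) = 0
  /-- product formula : h(x) = 0 for a single nonzero x -/
  product_formula : ∀ x : K, x ≠ 0 → h (fun _ : Fin 1 => x) = 0
  /-- additivity under Segre product -/
  segre : ∀ {ι κ : Type} [Fintype ι] [Fintype κ] (x : ι → K) (y : κ → K),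
    x ≠ 0 → y ≠ 0 → h (fun p : ι × κ => x p.1 * y p.2) = h x + h y
  /-- monotonicity: h(x) ≤ h(x,y) -/
  mono : ∀ {ι κ : Type} [Fintype ι] [Fintype κ] (x : ι → K) (y : κ → K),
    x ≠ 0 → h x ≤ h (Sum.elim x y)

/-- A non-archimedean GVF height: a GVF height satisfying the strong triangle
inequality `h(x+y) ≤ h(x,y)`. -/
structure NonArchGVFHeight (K : Type) [Field K] extends GVFHeight K where
  /-- strong triangle inequality -/
  strong_triangle : ∀ {ι : Type} [Fintype ι] (x y : ι → K),
    x ≠ 0 → y ≠ 0 → x + y ≠ 0 → h (x + y) ≤ h (Sum.elim x y)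

namespace GVFAux

variable {K : Type} [Field K] (G : NonArchGVFHeight K)

lemma pair_ne (x : K) : ![x, 1] ≠ 0 := by
  intro h
  have := congrFun h 1
  simp at this

lemma pair_ne' (x : K) : ![(1:K), x] ≠ 0 := by
  intro h
  have := congrFun h 0
  simp at this

/-- subtuple inequality via an injective index map -/
lemma h_mono_embed {ι κ : Type} [Fintype ι] [Fintype κ] (f : ι → κ)
    (hf : Function.Injective f) (y : κ → K) (hne : (y ∘ f) ≠ 0) :
    G.h (y ∘ f) ≤ G.h y := by
  classical
  let e : ι ⊕ {k : κ // ¬ k ∈ Set.range f} ≃ κ :=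
    (Equiv.sumCongr (Equiv.ofInjective f hf) (Equiv.refl _)).trans
      (Equiv.sumCompl (· ∈ Set.range f))
  have h1 : y ∘ ⇑e = Sum.elim (y ∘ f) (fun s => y s.val) := by
    funext s
    rcases s with i | s <;> rfl
  have h2 := G.mono (y ∘ f) (fun s : {k : κ // ¬ k ∈ Set.range f} => y s.val) hne
  calc G.h (y ∘ f) ≤ _ := h2
    _ = G.h y := by rw [← h1]; exact G.reindex e y

lemma h_nonneg {ι : Type} [Fintype ι] (y : ι → K) (i : ι) (hi : y i ≠ 0) :
    0 ≤ G.h y := by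
  have hp := G.product_formula (y i) hi
  have hemb := h_mono_embed G (fun _ : Fin 1 => i)
    (fun a b _ => Subsingleton.elim a b) y
    (by intro h; exact hi (congrFun h 0))
  have : y ∘ (fun _ : Fin 1 => i) = fun _ : Fin 1 => y i := rfl
  rw [this, hp] at hemb
  exact hemb

lemma hhat_nonneg (x : K) : 0 ≤ G.h ![x, 1] :=
  h_nonneg G ![x, 1] 1 (by simp)

lemma h_smul (c : K) (hc : c ≠ 0) {ι : Type} [Fintype ι] (x : ι → K)
    (hx : x ≠ 0) : G.h (fun i => c * x i) = G.h x := by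
  have hs := G.segre (fun _ : Fin 1 => c) x (by
    intro h; exact hc (congrFun h 0)) hx
  rw [G.product_formula c hc, zero_add] at hs
  let e : ι ≃ Fin 1 × ι :=
    ⟨fun i => (0, i), fun p => p.2, fun i => rfl,
      fun p => Prod.ext (Subsingleton.elim _ _) rfl⟩
  have h1 : (fun p : Fin 1 × ι => c * x p.2) ∘ ⇑e = fun i => c * x i := rfl
  rw [← hs, ← G.reindex e (fun p : Fin 1 × ι => c * x p.2), h1]

lemma h_swap (a b : K) : G.h ![a, b] = G.h ![b, a] := by
  let e : Fin 2 ≃ Fin 2 := ⟨![1, 0], ![1, 0], by decide, by decide⟩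
  have h1 : ![b, a] ∘ ⇑e = ![a, b] := by
    funext i
    fin_cases i <;> rfl
  rw [← G.reindex e ![b, a], h1]

lemma hhat_one : G.h ![(1:K), 1] = 0 := by
  have : ![(1:K), 1] = fun _ : Fin 2 => (1:K) := by
    funext i; fin_cases i <;> rfl
  rw [this]; exact G.h_one_one

lemma hhat_neg_one : G.h ![(1:K), -1] = 0 := by
  set v : Fin 2 → K := ![1, -1] with hv
  have hvne : v ≠ 0 := pair_ne' _
  have hs1 := G.segre v v hvne hvne
  have hs2 := G.segre v (fun _ : Fin 2 => (1:K)) hvne (by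
    intro h; exact one_ne_zero (congrFun h 0))
  rw [G.h_one_one, add_zero] at hs2
  let e : Fin 2 × Fin 2 ≃ Fin 2 × Fin 2 :=
    ⟨fun p => (p.1 + p.2, p.2), fun p => (p.1 + p.2, p.2), by decide, by decide⟩
  have h1 : (fun p : Fin 2 × Fin 2 => v p.1 * v p.2) ∘ ⇑e
      = fun p : Fin 2 × Fin 2 => v p.1 * (fun _ : Fin 2 => (1:K)) p.2 := by
    funext p
    rcases p with ⟨i, j⟩
    fin_cases i <;> fin_cases j <;> simp [v, e]
  have h2 := G.reindex e (fun p : Fin 2 × Fin 2 => v p.1 * v p.2)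
  rw [h1, hs2] at h2
  rw [hs1] at h2
  linarith

lemma hhat_neg_one' : G.h ![(-1:K), 1] = 0 := by
  rw [h_swap]; exact hhat_neg_one G

-- ones tuple of length 3 has height 0
lemma h_ones3 : G.h (fun _ : Fin 3 => (1:K)) = 0 := by
  have hone : (fun _ : Fin 2 => (1:K)) ≠ 0 := by
    intro h; exact one_ne_zero (congrFun h 0)
  have hs := G.segre (fun _ : Fin 2 => (1:K)) (fun _ : Fin 2 => (1:K)) hone hone
  rw [G.h_one_one, add_zero] at hs
  have hle := h_mono_embed G (f := (![(0,0),(0,1),(1,0)] : Fin 3 → Fin 2 × Fin 2))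
    (by decide) (fun p : Fin 2 × Fin 2 => (fun _ : Fin 2 => (1:K)) p.1 * (fun _ : Fin 2 => (1:K)) p.2)
    (by intro hz; have h0 := congrFun hz 0; norm_num at h0)
  have heq : (fun p : Fin 2 × Fin 2 => (fun _ : Fin 2 => (1:K)) p.1 * (fun _ : Fin 2 => (1:K)) p.2)
      ∘ (![(0,0),(0,1),(1,0)] : Fin 3 → Fin 2 × Fin 2) = fun _ : Fin 3 => (1:K) := by
    funext i; fin_cases i <;> norm_num
  rw [heq, hs] at hle
  have hge := h_nonneg G (fun _ : Fin 3 => (1:K)) 0 one_ne_zero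
  linarith

/-- height of (1,0) vanishes -/
lemma h_one_zero : G.h ![(1:K), 0] = 0 := by
  set v : Fin 2 → K := ![1, 0] with hv
  have hvne : v ≠ 0 := by intro h; exact one_ne_zero (congrFun h 0)
  have hge : 0 ≤ G.h v := h_nonneg G v 0 one_ne_zero
  have hs1 := G.segre v v hvne hvne
  let e4 : Fin 4 ≃ Fin 2 × Fin 2 :=
    ⟨(![(0,0),(0,1),(1,0),(1,1)] : Fin 4 → Fin 2 × Fin 2),
     fun p => ![![(0:Fin 4),1],![2,3]] p.1 p.2, by decide, by decide⟩
  have hA4 : (fun p : Fin 2 × Fin 2 => v p.1 * v p.2) ∘ ⇑e4 = ![(1:K),0,0,0] := by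
    funext i; fin_cases i <;> simp [v, e4]
  have h2 : G.h ![(1:K),0,0,0] = G.h v + G.h v := by
    rw [← hA4, G.reindex e4 _, hs1]
  have hones3 : (fun _ : Fin 3 => (1:K)) ≠ 0 := by
    intro h; exact one_ne_zero (congrFun h 0)
  have hs2 := G.segre v (fun _ : Fin 3 => (1:K)) hvne hones3
  rw [h_ones3, add_zero] at hs2
  have hle := h_mono_embed G (f := (![(0,0),(1,0),(1,1),(1,2)] : Fin 4 → Fin 2 × Fin 3))
    (by decide) (fun p : Fin 2 × Fin 3 => v p.1 * (fun _ : Fin 3 => (1:K)) p.2)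
    (by intro hz; have h0 := congrFun hz 0; norm_num [v] at h0)
  have heq : (fun p : Fin 2 × Fin 3 => v p.1 * (fun _ : Fin 3 => (1:K)) p.2)
      ∘ (![(0,0),(1,0),(1,1),(1,2)] : Fin 4 → Fin 2 × Fin 3) = ![(1:K),0,0,0] := by
    funext i; fin_cases i <;> simp [v]
  rw [heq, hs2] at hle
  rw [h2] at hle
  linarith

/-- submultiplicativity of ĥ -/
lemma key_mul (x y : K) : G.h ![x * y, 1] ≤ G.h ![x, 1] + G.h ![y, 1] := by
  have hE := G.segre ![x, 1] ![y, 1] (pair_ne x) (pair_ne y)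
  have hle := h_mono_embed G (f := (![(0,0),(1,1)] : Fin 2 → Fin 2 × Fin 2))
    (by decide) (fun p : Fin 2 × Fin 2 => ![x, 1] p.1 * ![y, 1] p.2)
    (by intro hz; have h0 := congrFun hz 1; norm_num at h0)
  have heq : (fun p : Fin 2 × Fin 2 => ![x, 1] p.1 * ![y, 1] p.2)
      ∘ (![(0,0),(1,1)] : Fin 2 → Fin 2 × Fin 2) = ![x * y, 1] := by
    funext i; fin_cases i <;> simp
  rw [heq, hE] at hle
  exact hle

lemma key_neg (x : K) : G.h ![-x, 1] ≤ G.h ![x, 1] := by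
  have := key_mul G (-1) x
  rw [hhat_neg_one' G, zero_add, neg_one_mul] at this
  exact this

lemma key_inv (x : K) (hx : x ≠ 0) : G.h ![x⁻¹, 1] = G.h ![x, 1] := by
  have hsm := h_smul G x⁻¹ (inv_ne_zero hx) ![x, 1] (pair_ne x)
  have heq : (fun i => x⁻¹ * ![x, 1] i) = ![(1:K), x⁻¹] := by
    funext i; fin_cases i <;> simp [inv_mul_cancel₀ hx]
  rw [heq] at hsm
  rw [← hsm, h_swap]

/-- strong triangle for ĥ -/
lemma key_add (x y : K) (hy : y ≠ 0) (_hxy : x + y ≠ 0) :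
    G.h ![x + y, 1] ≤ G.h ![x, 1] + G.h ![y, 1] := by
  -- strong triangle: h(x+y, 1) ≤ h(x, 1, y, 0)
  have hyne : ![y, (0:K)] ≠ 0 := by
    intro hz; exact hy (congrFun hz 0)
  have hsumne : ![x, (1:K)] + ![y, 0] ≠ 0 := by
    intro hz
    have := congrFun hz 1
    simp at this
  have st := G.strong_triangle ![x, 1] ![y, 0] (pair_ne x) hyne hsumne
  have eq1 : ![x, (1:K)] + ![y, 0] = ![x + y, 1] := by
    funext i; fin_cases i <;> simp
  let eS : Fin 4 ≃ Fin 2 ⊕ Fin 2 :=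
    ⟨![Sum.inl 0, Sum.inl 1, Sum.inr 0, Sum.inr 1],
     Sum.elim ![0, 1] ![2, 3], by decide, by decide⟩
  have eq2 : (Sum.elim ![x, (1:K)] ![y, 0]) ∘ ⇑eS = ![x, 1, y, 0] := by
    funext i; fin_cases i <;> rfl
  have hB : G.h ![x, 1, y, 0] = G.h (Sum.elim ![x, (1:K)] ![y, 0]) := by
    rw [← eq2]; exact G.reindex eS _
  -- h(x,1,y,0) ≤ h(x,1,y)
  have hCne : ![x, (1:K), y] ≠ 0 := by
    intro hz
    have := congrFun hz 1
    simp at this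
  have hD := G.segre ![x, (1:K), y] ![(1:K), 0] hCne
    (by intro hz; exact one_ne_zero (congrFun hz 0))
  rw [h_one_zero G, add_zero] at hD
  have hle1 := h_mono_embed G (f := (![(0,0),(1,0),(2,0),(0,1)] : Fin 4 → Fin 3 × Fin 2))
    (by decide) (fun p : Fin 3 × Fin 2 => ![x, (1:K), y] p.1 * ![(1:K), 0] p.2)
    (by intro hz; have h0 := congrFun hz 1; norm_num at h0)
  have heq1 : (fun p : Fin 3 × Fin 2 => ![x, (1:K), y] p.1 * ![(1:K), 0] p.2)
      ∘ (![(0,0),(1,0),(2,0),(0,1)] : Fin 4 → Fin 3 × Fin 2) = ![x, 1, y, 0] := by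
    funext i; fin_cases i <;> simp
  rw [heq1, hD] at hle1
  -- h(x,1,y) ≤ ĥ(x) + ĥ(y)
  have hE := G.segre ![x, 1] ![y, 1] (pair_ne x) (pair_ne y)
  have hle2 := h_mono_embed G (f := (![(0,1),(1,1),(1,0)] : Fin 3 → Fin 2 × Fin 2))
    (by decide) (fun p : Fin 2 × Fin 2 => ![x, 1] p.1 * ![y, 1] p.2)
    (by intro hz; have h0 := congrFun hz 1; norm_num at h0)
  have heq2 : (fun p : Fin 2 × Fin 2 => ![x, 1] p.1 * ![y, 1] p.2)
      ∘ (![(0,1),(1,1),(1,0)] : Fin 3 → Fin 2 × Fin 2) = ![x, (1:K), y] := by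
    funext i; fin_cases i <;> simp
  rw [heq2, hE] at hle2
  calc G.h ![x + y, 1] = G.h (![x, (1:K)] + ![y, 0]) := by rw [eq1]
    _ ≤ G.h (Sum.elim ![x, (1:K)] ![y, 0]) := st
    _ = G.h ![x, 1, y, 0] := hB.symm
    _ ≤ G.h ![x, (1:K), y] := hle1
    _ ≤ G.h ![x, 1] + G.h ![y, 1] := hle2

end GVFAux

/-- The constant field `{x | x = 0 ∨ ĥ(x) = 0}` of a non-archimedean GVF
is a subfield of `K`. -/
theorem nonarch_gvf_constant_subfield {K : Type} [Field K]
    (G : NonArchGVFHeight K) :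
    ∃ F : Subfield K, ∀ x : K, x ∈ F ↔ (x = 0 ∨ G.h ![x, 1] = 0) := by
  refine ⟨{
    carrier := {x : K | x = 0 ∨ G.h ![x, 1] = 0}
    zero_mem' := Or.inl rfl
    one_mem' := Or.inr (GVFAux.hhat_one G)
    add_mem' := ?_
    mul_mem' := ?_
    neg_mem' := ?_
    inv_mem' := ?_ }, fun x => Iff.rfl⟩
  · -- mul
    rintro a b ha hb
    by_cases ha0 : a = 0
    · exact Or.inl (by rw [ha0, zero_mul])
    by_cases hb0 : b = 0
    · exact Or.inl (by rw [hb0, mul_zero])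
    have ha' : G.h ![a, 1] = 0 := ha.resolve_left ha0
    have hb' : G.h ![b, 1] = 0 := hb.resolve_left hb0
    right
    have hle := GVFAux.key_mul G a b
    rw [ha', hb', add_zero] at hle
    exact le_antisymm hle (GVFAux.hhat_nonneg G _)
  · -- add
    rintro a b ha hb
    by_cases ha0 : a = 0
    · simpa [ha0] using hb
    by_cases hb0 : b = 0
    · simpa [hb0] using ha
    by_cases hab : a + b = 0
    · exact Or.inl hab
    have ha' : G.h ![a, 1] = 0 := ha.resolve_left ha0
    have hb' : G.h ![b, 1] = 0 := hb.resolve_left hb0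
    right
    have hle := GVFAux.key_add G a b hb0 hab
    rw [ha', hb', add_zero] at hle
    exact le_antisymm hle (GVFAux.hhat_nonneg G _)
  · -- neg
    rintro a ha
    by_cases ha0 : a = 0
    · exact Or.inl (by rw [ha0, neg_zero])
    have ha' : G.h ![a, 1] = 0 := ha.resolve_left ha0
    right
    have hle := GVFAux.key_neg G a
    rw [ha'] at hle
    exact le_antisymm hle (GVFAux.hhat_nonneg G _)
  · -- inv
    rintro a ha
    by_cases ha0 : a = 0
    · exact Or.inl (by rw [ha0, inv_zero])
    have ha' : G.h ![a, 1] = 0 := ha.resolve_left ha0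
    right
    rw [GVFAux.key_inv G a ha0, ha']
end

section
/- Let g(x) = B₂(fract(x)) with B₂(t) = t² − t + 1/6, which is differentiable exactly on ℝ ∖ ℤ with a derivative jump of −2 at each integer. Let p₁,…,pₙ and p′₁,…,p′ₙ be real numbers, and suppose the function F(x) = Σᵢ g(x − pᵢ) − Σᵢ g(x − p′ᵢ) is differentiable at every point of ℝ. Then the multisets {p₁ mod 1, …, pₙ mod 1} and {p′₁ mod 1, …, p′ₙ mod 1} coincide, i.e. the images of (pᵢ) and (p′ᵢ) in ℝ/ℤ agree as multisets. -/
open Set Filter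

private lemma floor_eq_on (k : ℤ) {x : ℝ} (h1 : (k:ℝ) ≤ x) (h2 : x < k + 1) : ⌊x⌋ = k :=
  Int.floor_eq_iff.2 ⟨h1, h2⟩

private lemma poly_deriv (m c : ℝ) :
    HasDerivAt (fun x : ℝ => (x - m) ^ 2 - (x - m) + 1 / 6) (2 * (c - m) - 1) c := by
  have h1 : HasDerivAt (fun x : ℝ => x - m) 1 c := (hasDerivAt_id c).sub_const m
  have := ((h1.fun_pow 2).fun_sub h1).add_const (1/6 : ℝ)
  refine this.congr_deriv ?_
  ring

private lemma g_right (g : ℝ → ℝ)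
    (hg : ∀ x : ℝ, g x = (Int.fract x) ^ 2 - Int.fract x + 1 / 6) (c : ℝ) :
    HasDerivWithinAt g (2 * Int.fract c - 1) (Set.Ici c) c := by
  have hk : c < (⌊c⌋ : ℝ) + 1 := Int.lt_floor_add_one c
  have hq := (poly_deriv (⌊c⌋ : ℝ) c).hasDerivWithinAt (s := Set.Ici c)
  have heq : ∀ x ∈ Set.Ico c ((⌊c⌋ : ℝ) + 1),
      g x = (x - (⌊c⌋:ℝ)) ^ 2 - (x - (⌊c⌋:ℝ)) + 1 / 6 := by
    intro x hx
    have hfl : ⌊x⌋ = ⌊c⌋ := floor_eq_on ⌊c⌋ (le_trans (Int.floor_le c) hx.1) hx.2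
    rw [hg x, Int.fract, hfl]
  have hmem : Set.Ico c ((⌊c⌋ : ℝ) + 1) ∈ nhdsWithin c (Set.Ici c) :=
    Ico_mem_nhdsGE_of_mem ⟨le_refl c, hk⟩
  have hc : g c = (c - (⌊c⌋:ℝ)) ^ 2 - (c - (⌊c⌋:ℝ)) + 1 / 6 :=
    heq c ⟨le_refl c, hk⟩
  have h : HasDerivWithinAt g (2 * (c - (⌊c⌋:ℝ)) - 1) (Set.Ici c) c := by
    refine hq.congr_of_eventuallyEq ?_ hc
    filter_upwards [hmem] with x hx using heq x hx
  have hfr : Int.fract c = c - (⌊c⌋:ℝ) := rfl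
  rw [hfr]; exact h

private lemma g_left (g : ℝ → ℝ)
    (hg : ∀ x : ℝ, g x = (Int.fract x) ^ 2 - Int.fract x + 1 / 6) (c : ℝ) :
    HasDerivWithinAt g
      (2 * (if Int.fract c = 0 then (1:ℝ) else Int.fract c) - 1) (Set.Iic c) c := by
  by_cases h0 : Int.fract c = 0
  · -- c is an integer
    have hc : ((⌊c⌋ : ℝ)) = c := by
      have := Int.fract.eq_1 c
      rw [h0] at this; linarith [this]
    have hq := (poly_deriv (c - 1) c).hasDerivWithinAt (s := Set.Iic c)
    have heq : ∀ x ∈ Set.Ioc (c - 1) c,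
        g x = (x - (c - 1)) ^ 2 - (x - (c - 1)) + 1 / 6 := by
      intro x hx
      rcases eq_or_lt_of_le hx.2 with h | h
      · subst h
        rw [hg x, Int.fract.eq_1, hc]
        ring
      · have hfl : ⌊x⌋ = ⌊c⌋ - 1 := by
          apply floor_eq_on
          · push_cast; rw [hc]; linarith [hx.1]
          · push_cast; rw [hc]; linarith
        rw [hg x, Int.fract, hfl]
        push_cast
        rw [hc]
    have hcc : g c = (c - (c - 1)) ^ 2 - (c - (c - 1)) + 1 / 6 :=
      heq c ⟨by linarith, le_refl c⟩
    have hmem : Set.Ioc (c - 1) c ∈ nhdsWithin c (Set.Iic c) :=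
      Ioc_mem_nhdsLE_of_mem ⟨by linarith, le_refl c⟩
    have : HasDerivWithinAt g (2 * (c - (c - 1)) - 1) (Set.Iic c) c := by
      refine hq.congr_of_eventuallyEq ?_ hcc
      filter_upwards [hmem] with x hx using heq x hx
    simp only [h0, if_pos]
    convert this using 1
    ring
  · -- c is not an integer
    have hpos : (0:ℝ) < Int.fract c := lt_of_le_of_ne (Int.fract_nonneg c) (Ne.symm h0)
    have hk : (⌊c⌋ : ℝ) < c := by
      have := Int.fract.eq_1 c
      linarith
    have hq := (poly_deriv (⌊c⌋ : ℝ) c).hasDerivWithinAt (s := Set.Iic c)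
    have heq : ∀ x ∈ Set.Ioc ((⌊c⌋:ℝ)) c,
        g x = (x - (⌊c⌋:ℝ)) ^ 2 - (x - (⌊c⌋:ℝ)) + 1 / 6 := by
      intro x hx
      have hfl : ⌊x⌋ = ⌊c⌋ := floor_eq_on ⌊c⌋ hx.1.le
        (lt_of_le_of_lt hx.2 (Int.lt_floor_add_one c))
      rw [hg x, Int.fract, hfl]
    have hcc : g c = (c - (⌊c⌋:ℝ)) ^ 2 - (c - (⌊c⌋:ℝ)) + 1 / 6 := heq c ⟨hk, le_refl c⟩
    have hmem : Set.Ioc ((⌊c⌋:ℝ)) c ∈ nhdsWithin c (Set.Iic c) :=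
      Ioc_mem_nhdsLE_of_mem ⟨hk, le_refl c⟩
    have : HasDerivWithinAt g (2 * (c - (⌊c⌋:ℝ)) - 1) (Set.Iic c) c := by
      refine hq.congr_of_eventuallyEq ?_ hcc
      filter_upwards [hmem] with x hx using heq x hx
    have hfr : Int.fract c = c - (⌊c⌋:ℝ) := rfl
    rw [if_neg h0, hfr]; exact this

/-- If `g(x) = B₂(fract x)` and the function
`F(x) = Σᵢ g(x − pᵢ) − Σᵢ g(x − p′ᵢ)` is differentiable everywhere, then the
multisets of the images of the `pᵢ` and the `p′ᵢ` in `ℝ/ℤ` coincide. -/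
theorem green_function_differentiable_implies_retractions_agree
    (g : ℝ → ℝ)
    (hg : ∀ x : ℝ, g x = (Int.fract x) ^ 2 - Int.fract x + 1 / 6)
    (n : ℕ) (p p' : Fin n → ℝ)
    (hF : Differentiable ℝ
      (fun x : ℝ => (∑ i, g (x - p i)) - ∑ i, g (x - p' i))) :
    (Finset.univ.val.map fun i : Fin n => ((p i : ℝ) : AddCircle (1 : ℝ))) =
    (Finset.univ.val.map fun i : Fin n => ((p' i : ℝ) : AddCircle (1 : ℝ))) := by
  classical
  set F : ℝ → ℝ := fun x : ℝ => (∑ i, g (x - p i)) - ∑ i, g (x - p' i) with hFdef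
  -- auxiliary : one-sided derivatives of x ↦ g (x - a)
  have hR : ∀ (a c : ℝ), HasDerivWithinAt (fun x => g (x - a))
      (2 * Int.fract (c - a) - 1) (Set.Ici c) c := by
    intro a c
    have hinner : HasDerivWithinAt (fun x : ℝ => x - a) 1 (Set.Ici c) c :=
      ((hasDerivAt_id c).sub_const a).hasDerivWithinAt
    have hmaps : Set.MapsTo (fun x : ℝ => x - a) (Set.Ici c) (Set.Ici (c - a)) :=
      fun x hx => by simp only [Set.mem_Ici] at *; linarith
    have := (g_right g hg (c - a)).comp c hinner hmaps
    simpa [Function.comp_def] using this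
  have hL : ∀ (a c : ℝ), HasDerivWithinAt (fun x => g (x - a))
      (2 * (if Int.fract (c - a) = 0 then (1:ℝ) else Int.fract (c - a)) - 1)
      (Set.Iic c) c := by
    intro a c
    have hinner : HasDerivWithinAt (fun x : ℝ => x - a) 1 (Set.Iic c) c :=
      ((hasDerivAt_id c).sub_const a).hasDerivWithinAt
    have hmaps : Set.MapsTo (fun x : ℝ => x - a) (Set.Iic c) (Set.Iic (c - a)) :=
      fun x hx => by simp only [Set.mem_Iic] at *; linarith
    have := (g_left g hg (c - a)).comp c hinner hmaps
    simpa [Function.comp_def] using this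
  -- key counting lemma
  have key : ∀ c : ℝ,
      (Finset.univ.filter fun i : Fin n => Int.fract (c - p i) = 0).card =
      (Finset.univ.filter fun i : Fin n => Int.fract (c - p' i) = 0).card := by
    intro c
    have hFr : HasDerivWithinAt F
        ((∑ i, (2 * Int.fract (c - p i) - 1)) - ∑ i, (2 * Int.fract (c - p' i) - 1))
        (Set.Ici c) c := by
      exact (HasDerivWithinAt.fun_sum fun i _ => hR (p i) c).sub
        (HasDerivWithinAt.fun_sum fun i _ => hR (p' i) c)
    have hFl : HasDerivWithinAt F
        ((∑ i, (2 * (if Int.fract (c - p i) = 0 then (1:ℝ) else Int.fract (c - p i)) - 1)) -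
         ∑ i, (2 * (if Int.fract (c - p' i) = 0 then (1:ℝ) else Int.fract (c - p' i)) - 1))
        (Set.Iic c) c := by
      exact (HasDerivWithinAt.fun_sum fun i _ => hL (p i) c).sub
        (HasDerivWithinAt.fun_sum fun i _ => hL (p' i) c)
    have hd := (hF c).hasDerivAt
    have h1 : (∑ i, (2 * Int.fract (c - p i) - 1)) - ∑ i, (2 * Int.fract (c - p' i) - 1)
        = deriv F c := by
      rw [← hFr.derivWithin (uniqueDiffOn_Ici c c Set.self_mem_Ici),
        ← (hd.hasDerivWithinAt (s := Set.Ici c)).derivWithin (uniqueDiffOn_Ici c c Set.self_mem_Ici)]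
    have h2 : (∑ i, (2 * (if Int.fract (c - p i) = 0 then (1:ℝ) else Int.fract (c - p i)) - 1)) -
        ∑ i, (2 * (if Int.fract (c - p' i) = 0 then (1:ℝ) else Int.fract (c - p' i)) - 1)
        = deriv F c := by
      rw [← hFl.derivWithin (uniqueDiffOn_Iic c c Set.self_mem_Iic),
        ← (hd.hasDerivWithinAt (s := Set.Iic c)).derivWithin (uniqueDiffOn_Iic c c Set.self_mem_Iic)]
    have h3 := h1.trans h2.symm
    -- reduce to indicator sums
    have hsum : ∀ f : Fin n → ℝ, ∑ i, (2 * f i - 1) = 2 * (∑ i, f i) - n := by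
      intro f
      rw [Finset.sum_sub_distrib, ← Finset.mul_sum]
      simp [Finset.card_univ]
    rw [hsum, hsum, hsum, hsum] at h3
    have h4 : (∑ i, (if Int.fract (c - p i) = 0 then (1:ℝ) else 0)) =
        ∑ i, (if Int.fract (c - p' i) = 0 then (1:ℝ) else 0) := by
      have e : ∀ t : ℝ, (if Int.fract t = 0 then (1:ℝ) else 0) =
          (if Int.fract t = 0 then (1:ℝ) else Int.fract t) - Int.fract t := by
        intro t
        by_cases h : Int.fract t = 0 <;> simp [h]
      simp only [e]
      rw [Finset.sum_sub_distrib, Finset.sum_sub_distrib]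
      linarith [h3]
    have h5 : ((Finset.univ.filter fun i : Fin n => Int.fract (c - p i) = 0).card : ℝ) =
        ((Finset.univ.filter fun i : Fin n => Int.fract (c - p' i) = 0).card : ℝ) := by
      rw [← Finset.sum_boole, ← Finset.sum_boole]
      exact h4
    exact_mod_cast h5
  -- translate to multiset statement
  apply Multiset.ext.2
  intro a
  induction a using QuotientAddGroup.induction_on with
  | H c =>
    have hiff : ∀ q : ℝ, ((c : AddCircle (1:ℝ)) = (q : AddCircle (1:ℝ))) ↔
        Int.fract (c - q) = 0 := by
      intro q
      rw [QuotientAddGroup.eq]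
      constructor
      · rintro ⟨z, hz⟩
        simp only [zsmul_eq_mul, mul_one] at hz
        have : c - q = (-z : ℤ) := by push_cast; linarith
        rw [this, Int.fract_intCast]
      · intro h
        have := Int.fract.eq_1 (c - q)
        rw [h] at this
        refine ⟨-⌊c - q⌋, ?_⟩
        simp only [zsmul_eq_mul, mul_one]
        push_cast
        linarith
    rw [Multiset.count_map, Multiset.count_map]
    have e1 : (Multiset.filter (fun i : Fin n => (c : AddCircle (1:ℝ)) = (p i : AddCircle (1:ℝ)))
        Finset.univ.val).card = (Finset.univ.filter fun i : Fin n =>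
          Int.fract (c - p i) = 0).card := by
      rw [show (Finset.univ.filter fun i : Fin n => Int.fract (c - p i) = 0).card =
        (Multiset.filter (fun i : Fin n => Int.fract (c - p i) = 0) Finset.univ.val).card from rfl]
      congr 1
      apply Multiset.filter_congr
      intro i _
      exact hiff (p i)
    have e2 : (Multiset.filter (fun i : Fin n => (c : AddCircle (1:ℝ)) = (p' i : AddCircle (1:ℝ)))
        Finset.univ.val).card = (Finset.univ.filter fun i : Fin n =>
          Int.fract (c - p' i) = 0).card := by
      rw [show (Finset.univ.filter fun i : Fin n => Int.fract (c - p' i) = 0).card =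
        (Multiset.filter (fun i : Fin n => Int.fract (c - p' i) = 0) Finset.univ.val).card from rfl]
      congr 1
      apply Multiset.filter_congr
      intro i _
      exact hiff (p' i)
    rw [e1, e2, key c]
end
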